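/- Every diffeomorphism of V that preserves the canonical Liouville form θ⁰ is a linear symplectic automorphism, and conversely every linear symplectic automorphism preserves θ⁰; that is, Aut(V, θ⁰) = Sp(V, Ω). Concretely: a diffeomorphism g: V → V satisfies Ω(g(z), Dg_z(v)) = Ω(z, v) for all z, v ∈ V if and only if g is linear and lies in Sp(V, Ω). -/

import Mathlib

/-- A diffeomorphism `g : V → V` preserves the canonical Liouville form `θ⁰`,
i.e. satisfies `Ω(g(z), Dg_z(v)) = Ω(z, v)` for all `z, v`, if and only if `g` is linear and
lies in `Sp(V, Ω)`; that is, `Aut(V, θ⁰) = Sp(V, Ω)`. -/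
theorem stmt_0 {V : Type*} [NormedAddCommGroup V] [NormedSpace ℝ V] [FiniteDimensional ℝ V]
    (Ω : V →ₗ[ℝ] V →ₗ[ℝ] ℝ)
    (hΩalt : ∀ x : V, Ω x x = 0)
    (hΩnd : ∀ x : V, (∀ y : V, Ω x y = 0) → x = 0)
    (g ginv : V → V) (hg : ContDiff ℝ (⊤ : ℕ∞) g) (hginv : ContDiff ℝ (⊤ : ℕ∞) ginv)
    (hli : Function.LeftInverse ginv g) (hri : Function.RightInverse ginv g) :
    (∀ z v : V, Ω (g z) (fderiv ℝ g z v) = Ω z v) ↔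
      (IsLinearMap ℝ g ∧ Function.Bijective g ∧ ∀ x y : V, Ω (g x) (g y) = Ω x y) := by
  classical
  constructor
  · intro H
    -- antisymmetry
    have hΩanti : ∀ x y : V, Ω x y = - Ω y x := by
      intro x y
      have h := hΩalt (x + y)
      simp [map_add, hΩalt x, hΩalt y] at h
      linarith
    -- continuous bilinear version of Ω
    set Ωc : V →L[ℝ] V →L[ℝ] ℝ := LinearMap.toContinuousLinearMap
      { toFun := fun x => LinearMap.toContinuousLinearMap (Ω x)
        map_add' := by intro x y; ext w; simp
        map_smul' := by intro c x; ext w; simp } with hΩcdef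
    have hΩc : ∀ x y : V, Ωc x y = Ω x y := by intro x y; simp [hΩcdef]
    set f' : V → V →L[ℝ] V := fun z => fderiv ℝ g z with hf'def
    have hgdiff : Differentiable ℝ g := hg.differentiable (by simp)
    have hgd : ∀ z, HasFDerivAt g (f' z) z := fun z => (hgdiff z).hasFDerivAt
    have hf'diff : Differentiable ℝ f' := (hg.fderiv_right (m := (⊤:ℕ∞)) (by norm_cast)).differentiable (by simp)
    set f'' : V → V →L[ℝ] V →L[ℝ] V := fun z => fderiv ℝ f' z with hf''def
    have hf''d : ∀ z, HasFDerivAt f' (f'' z) z := fun z => (hf'diff z).hasFDerivAt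
    have hsymm : ∀ z u v, f'' z u v = f'' z v u := fun z u v =>
      second_derivative_symmetric hgd (hf''d z) u v
    -- differentiate the hypothesis
    have key : ∀ z u v : V, Ω (f' z u) (f' z v) + Ω (g z) (f'' z u v) = Ω u v := by
      intro z u v
      have hc : HasFDerivAt (fun y => Ωc (g y)) (Ωc.comp (f' z)) z :=
        Ωc.hasFDerivAt.comp z (hgd z)
      have hu : HasFDerivAt (fun y => f' y v)
          ((ContinuousLinearMap.apply ℝ V v).comp (f'' z)) z :=
        (ContinuousLinearMap.apply ℝ V v).hasFDerivAt.comp z (hf''d z)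
      have h1 : HasFDerivAt (fun y => Ωc (g y) (f' y v))
          ((Ωc (g z)).comp ((ContinuousLinearMap.apply ℝ V v).comp (f'' z)) +
            (Ωc.comp (f' z)).flip (f' z v)) z := hc.clm_apply hu
      have h2 : HasFDerivAt (fun y => Ωc (g y) (f' y v)) (Ωc.flip v) z := by
        have : (fun y => Ωc (g y) (f' y v)) = fun y => Ωc y v := by
          funext y
          rw [hΩc, hΩc]
          exact H y v
        rw [this]
        exact ((Ωc.flip v).hasFDerivAt)
      have h3 := h1.unique h2
      have h4 := congrArg (fun (L : V →L[ℝ] ℝ) => L u) h3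
      simp only [ContinuousLinearMap.add_apply, ContinuousLinearMap.comp_apply,
        ContinuousLinearMap.flip_apply, ContinuousLinearMap.apply_apply] at h4
      rw [hΩc, hΩc, hΩc] at h4
      linarith
    -- ω-preservation
    have E2 : ∀ z u v : V, Ω (f' z u) (f' z v) = Ω u v := by
      intro z u v
      have k1 := key z u v
      have k2 := key z v u
      rw [hsymm z v u] at k2
      have a1 := hΩanti (f' z u) (f' z v)
      have a2 := hΩanti u v
      linarith
    -- g z = Dg_z z
    have E3 : ∀ z : V, g z = f' z z := by
      intro z
      have hsurj : ∀ w : V, ∃ v : V, f' z v = w := by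
        intro w
        have hdginv : HasFDerivAt ginv (fderiv ℝ ginv (g z)) (g z) :=
          ((hginv.differentiable (by simp)) (g z)).hasFDerivAt
        have hcomp : HasFDerivAt (g ∘ ginv) ((f' (ginv (g z))).comp (fderiv ℝ ginv (g z)))
            (g z) := (hgd (ginv (g z))).comp (g z) hdginv
        have hid : HasFDerivAt (g ∘ ginv) (ContinuousLinearMap.id ℝ V) (g z) := by
          have : (g ∘ ginv) = id := funext hri
          rw [this]
          exact hasFDerivAt_id _
        have := hcomp.unique hid
        rw [hli z] at this
        refine ⟨fderiv ℝ ginv (g z) w, ?_⟩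
        have := congrArg (fun (L : V →L[ℝ] V) => L w) this
        simpa using this
      have : ∀ w : V, Ω (g z - f' z z) w = 0 := by
        intro w
        obtain ⟨v, rfl⟩ := hsurj w
        have h1 := H z v
        have h2 := E2 z z v
        simp only [map_sub, LinearMap.sub_apply]
        linarith
      have := hΩnd _ this
      exact sub_eq_zero.mp this
    -- scaling: g (t • z) = t • g z for t > 0
    have hderivc : ∀ (z : V) (t : ℝ), HasDerivAt (fun s : ℝ => g (s • z)) (f' (t • z) z) t := by
      intro z t
      have h1 : HasDerivAt (fun s : ℝ => s • z) ((1 : ℝ) • z) t :=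
        (hasDerivAt_id t).smul_const z
      rw [one_smul] at h1
      exact (hgd (t • z)).comp_hasDerivAt t h1
    have hscale : ∀ (z : V) (t : ℝ), 0 < t → g (t • z) = t • g z := by
      intro z t ht
      have hw : ∀ s ∈ Set.Ioi (0 : ℝ),
          HasDerivWithinAt (fun s : ℝ => s⁻¹ • g (s • z)) 0 (Set.Ioi (0 : ℝ)) s := by
        intro s hs
        have hs0 : s ≠ 0 := ne_of_gt hs
        have hinv : HasDerivAt (fun y : ℝ => y⁻¹) (-(s ^ 2)⁻¹) s := hasDerivAt_inv hs0
        have hmul := hinv.smul (hderivc z s)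
        have hval : f' (s • z) z = s⁻¹ • g (s • z) := by
          have h1 : g (s • z) = f' (s • z) (s • z) := E3 (s • z)
          rw [map_smul] at h1
          rw [h1, smul_smul, inv_mul_cancel₀ hs0, one_smul]
        rw [hval] at hmul
        have hzero : s⁻¹ • s⁻¹ • g (s • z) + (-(s ^ 2)⁻¹) • g (s • z) = 0 := by
          rw [smul_smul]
          have : s⁻¹ * s⁻¹ = (s ^ 2)⁻¹ := by
            rw [sq, mul_inv]
          rw [this, neg_smul, add_neg_cancel]
        rw [hzero] at hmul
        exact hmul.hasDerivWithinAt
      have hconst : ∀ a ∈ Set.Ioi (0 : ℝ), ∀ b ∈ Set.Ioi (0 : ℝ),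
          (fun s : ℝ => s⁻¹ • g (s • z)) a = (fun s : ℝ => s⁻¹ • g (s • z)) b := by
        intro a ha b hb
        have h0map : ContinuousLinearMap.toSpanSingleton ℝ (0 : V) = 0 := by
          ext; simp [ContinuousLinearMap.smulRight_apply]
        have := (convex_Ioi (0 : ℝ)).norm_image_sub_le_of_norm_hasFDerivWithin_le
          (C := 0) (f' := fun _ => (0 : ℝ →L[ℝ] V))
          (fun x hx => h0map ▸ (hw x hx).hasFDerivWithinAt) (fun x _ => by simp) hb ha
        simp only [norm_zero, zero_mul] at this
        exact sub_eq_zero.mp (norm_le_zero_iff.mp this)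
      have h1 := hconst t (Set.mem_Ioi.mpr ht) 1 (Set.mem_Ioi.mpr one_pos)
      simp only [inv_one, one_smul] at h1
      have := congrArg (fun x => t • x) h1
      simpa [smul_smul, mul_inv_cancel₀ (ne_of_gt ht)] using this
    have hg0 : g 0 = 0 := by
      have h1 := hscale 0 2 (by norm_num)
      rw [smul_zero] at h1
      have h2 : (2 : ℝ) • g 0 = g 0 + g 0 := two_smul ℝ (g 0)
      rw [h2] at h1
      have := congrArg (fun x => x - g 0) h1
      simpa using this.symm
    -- linearity: g z = f' 0 z
    have hlin : ∀ z : V, g z = f' 0 z := by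
      intro z
      have hd0 : HasDerivWithinAt (fun s : ℝ => g (s • z)) (f' 0 z) (Set.Ici (0 : ℝ)) 0 := by
        have := hderivc z 0
        rw [zero_smul] at this
        exact this.hasDerivWithinAt
      have hd1 : HasDerivWithinAt (fun s : ℝ => g (s • z)) (g z) (Set.Ici (0 : ℝ)) 0 := by
        have hlinfun : HasDerivAt (fun s : ℝ => s • g z) ((1 : ℝ) • g z) 0 :=
          (hasDerivAt_id 0).smul_const (g z)
        rw [one_smul] at hlinfun
        refine hlinfun.hasDerivWithinAt.congr ?_ ?_
        · intro s hs
          rcases eq_or_lt_of_le (Set.mem_Ici.mp hs) with h | h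
          · rw [← h]; simp [hg0]
          · exact hscale z s h
        · simp [hg0]
      exact ((uniqueDiffOn_Ici (0 : ℝ)) 0 Set.self_mem_Ici).eq_deriv _ hd1 hd0
    have hfun : g = ⇑(f' 0) := funext hlin
    refine ⟨?_, ⟨hli.injective, hri.surjective⟩, ?_⟩
    · exact ⟨by intro x y; rw [hlin, hlin, hlin, map_add],
        by intro c x; rw [hlin, hlin, map_smul]⟩
    · intro x y
      have hfd : HasFDerivAt g (f' 0) x := by
        rw [hfun]; exact (f' 0).hasFDerivAt
      have hfx : f' x = f' 0 := hfd.fderiv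
      have := H x y
      rw [show fderiv ℝ g x = f' x from rfl, hfx, ← hlin y] at this
      exact this
  · rintro ⟨hlin, _, hsymp⟩ z v
    have hfd : HasFDerivAt g (LinearMap.toContinuousLinearMap (IsLinearMap.mk' g hlin)) z := by
      have := (LinearMap.toContinuousLinearMap (IsLinearMap.mk' g hlin)).hasFDerivAt (x := z)
      convert this using 1
      funext x; rfl
    rw [hfd.fderiv]
    simpa using hsymp z v
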